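/- If u and v are strings of the same length and at least one of them has at most two runs (a run is a maximal block of one repeated character), then the Levenshtein distance between u and v equals their Hamming distance. -/

import Mathlib

/-- Hamming distance between two lists (number of mismatched positions). -/
def hammingDistL {α : Type*} [DecidableEq α] (u v : List α) : ℕ :=
  (u.zip v).countP (fun p => p.1 ≠ p.2)

/-- Number of runs of a string: length after collapsing consecutive equal characters. -/
def numRuns {α : Type*} [DecidableEq α] (u : List α) : ℕ :=
  (u.destutter (· ≠ ·)).length

/-! `levenshtein` (formerly `Mathlib/Data/List/EditDistance/Defs.lean`) is no longer in Mathlib;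
its old definition is reproduced here. -/

namespace Levenshtein

/-- Cost of the three edit operations. -/
structure Cost (α β δ : Type*) where
  /-- cost to delete -/
  delete : α → δ
  /-- cost to insert -/
  insert : β → δ
  /-- cost to substitute -/
  substitute : α → β → δ

/-- The default cost: every operation costs 1, substituting equal characters costs 0. -/
def defaultCost {α : Type*} [DecidableEq α] : Cost α α ℕ where
  delete _ := 1
  insert _ := 1
  substitute a b := if a = b then 0 else 1

/-- Step of the dynamic program. -/
def impl {α β δ : Type*} [AddZeroClass δ] [Min δ]
    (C : Cost α β δ)
    (xs : List α) (y : β) (d : {r : List δ // 0 < r.length}) : {r : List δ // 0 < r.length} :=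
  let ⟨ds, w⟩ := d
  xs.zip (ds.zip ds.tail) |>.foldr
    (init := ⟨[ds.getLast (List.ne_nil_of_length_pos w) + C.insert y], by simp⟩)
    (fun ⟨x, d₀, d₁⟩ ⟨r, w⟩ =>
      ⟨min (C.delete x + r[0]) (min (C.insert y + d₀) (C.substitute x y + d₁)) :: r, by simp⟩)

end Levenshtein

open Levenshtein

/-- Levenshtein distances of all suffixes of `xs` to `ys`. -/
def suffixLevenshtein {α β δ : Type*} [AddZeroClass δ] [Min δ] (C : Cost α β δ)
    (xs : List α) (ys : List β) : {r : List δ // 0 < r.length} :=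
  ys.foldr
    (impl C xs)
    (xs.foldr (init := ⟨[0], by simp⟩) (fun a ⟨r, w⟩ => ⟨(C.delete a + r[0]) :: r, by simp⟩))

/-- The Levenshtein distance with costs `C`. -/
def levenshtein {α β δ : Type*} [AddZeroClass δ] [Min δ] (C : Cost α β δ)
    (xs : List α) (ys : List β) : δ :=
  let ⟨r, w⟩ := suffixLevenshtein C xs ys
  r[0]

namespace Levenshtein

variable {α β δ : Type*} [AddZeroClass δ] [Min δ] (C : Cost α β δ)

lemma lev_eq_head (xs : List α) (ys : List β) :
    levenshtein C xs ys = (suffixLevenshtein C xs ys).1[0]'(suffixLevenshtein C xs ys).2 := rfl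

lemma getElem_zero_of_eq' {l : List δ} {a : δ} {t : List δ} (w : 0 < l.length)
    (h : l = a :: t) : l[0]'w = a := by
  subst h; rfl

lemma impl_cons' (x : α) (xs : List α) (y : β) (d d' : {r : List δ // 0 < r.length})
    (d0 d1 : δ) (ds : List δ) (h : d.1 = d0 :: d1 :: ds) (h' : d'.1 = d1 :: ds) :
    (impl C (x :: xs) y d).1 = min (C.delete x + (impl C xs y d').1[0]'(impl C xs y d').2)
      (min (C.insert y + d0) (C.substitute x y + d1)) :: (impl C xs y d').1 := by
  obtain ⟨l, w⟩ := d
  obtain ⟨l', w'⟩ := d'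
  simp only at h h'
  subst h h'
  rfl

lemma impl_length' (y : β) : ∀ (xs : List α) (d : {r : List δ // 0 < r.length}),
    d.1.length = xs.length + 1 → (impl C xs y d).1.length = xs.length + 1 := by
  intro xs
  induction xs with
  | nil => intro d _; rfl
  | cons x xs ih =>
    intro d h
    rcases d with ⟨_ | ⟨d0, _ | ⟨d1, ds⟩⟩, w⟩
    · simp at w
    · simp at h
    · have h2 := ih ⟨d1 :: ds, by simp⟩ (by simp at h ⊢; omega)
      rw [impl_cons' C x xs y _ ⟨d1 :: ds, by simp⟩ d0 d1 ds rfl rfl]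
      simp only [List.length_cons] at h2 ⊢
      omega

lemma suffix_cons_nil' (x : α) (xs : List α) :
    (suffixLevenshtein C (x :: xs) ([] : List β)).1 =
      levenshtein C (x :: xs) ([] : List β) :: (suffixLevenshtein C xs ([] : List β)).1 := rfl

lemma suffix_length' (xs : List α) (ys : List β) :
    (suffixLevenshtein C xs ys).1.length = xs.length + 1 := by
  induction ys with
  | nil =>
    induction xs with
    | nil => rfl
    | cons x xs ih => rw [suffix_cons_nil']; simp [ih]
  | cons y ys ih => exact impl_length' C y xs _ ih

lemma suffix_cons₁' (x : α) (xs : List α) (ys : List β) :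
    (suffixLevenshtein C (x :: xs) ys).1 =
      levenshtein C (x :: xs) ys :: (suffixLevenshtein C xs ys).1 := by
  induction ys with
  | nil => rfl
  | cons y ys ih =>
    have hl := suffix_length' C xs ys
    obtain ⟨d1, ds, hT⟩ : ∃ d1 ds, (suffixLevenshtein C xs ys).1 = d1 :: ds := by
      cases h : (suffixLevenshtein C xs ys).1 with
      | nil => simp [h] at hl
      | cons a l => exact ⟨a, l, rfl⟩
    have key := impl_cons' C x xs y (suffixLevenshtein C (x :: xs) ys) (suffixLevenshtein C xs ys)
      (levenshtein C (x :: xs) ys) d1 ds (by rw [ih, hT]) hT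
    have gen : ∀ (l t : List δ) (a : δ) (w : 0 < l.length), l = a :: t → l = l[0]'w :: t := by
      rintro l t a w rfl; rfl
    exact gen _ _ _ (impl C (x :: xs) y (suffixLevenshtein C (x :: xs) ys)).2 key

@[simp] lemma defaultCost_delete' {ε : Type*} [DecidableEq ε] (a : ε) :
    (defaultCost : Cost ε ε ℕ).delete a = 1 := rfl

@[simp] lemma defaultCost_insert' {ε : Type*} [DecidableEq ε] (a : ε) :
    (defaultCost : Cost ε ε ℕ).insert a = 1 := rfl

@[simp] lemma defaultCost_substitute' {ε : Type*} [DecidableEq ε] (a b : ε) :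
    (defaultCost : Cost ε ε ℕ).substitute a b = if a = b then 0 else 1 := rfl

theorem levenshtein_nil_nil : levenshtein C ([] : List α) ([] : List β) = 0 := rfl

theorem levenshtein_cons_nil (x : α) (xs : List α) :
    levenshtein C (x :: xs) ([] : List β) = C.delete x + levenshtein C xs ([] : List β) := rfl

theorem levenshtein_nil_cons' (y : β) (ys : List β) :
    levenshtein C ([] : List α) (y :: ys) = levenshtein C ([] : List α) ys + C.insert y := by
  have hl := suffix_length' C ([] : List α) ys
  have e : (suffixLevenshtein C ([] : List α) (y :: ys)).1 =
      [(suffixLevenshtein C ([] : List α) ys).1.getLast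
        (List.ne_nil_of_length_pos (suffixLevenshtein C ([] : List α) ys).2) + C.insert y] := rfl
  rw [lev_eq_head, getElem_zero_of_eq' _ e, lev_eq_head]
  congr 1
  have gen : ∀ (l : List δ) (w1 : l ≠ []) (w2 : 0 < l.length), l.length = 1 →
      l.getLast w1 = l[0]'w2 := by
    rintro (_ | ⟨a, _ | ⟨b, l⟩⟩) w1 w2 h <;> simp at h ⊢
  exact gen _ _ _ hl

theorem levenshtein_nil_cons {γ ε : Type*} (C : Cost γ ε ℕ) (y : ε) (ys : List ε) :
    levenshtein C ([] : List γ) (y :: ys) = C.insert y + levenshtein C ([] : List γ) ys := by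
  rw [levenshtein_nil_cons', Nat.add_comm]

theorem levenshtein_cons_cons (x : α) (xs : List α) (y : β) (ys : List β) :
    levenshtein C (x :: xs) (y :: ys) =
      min (C.delete x + levenshtein C xs (y :: ys))
        (min (C.insert y + levenshtein C (x :: xs) ys)
          (C.substitute x y + levenshtein C xs ys)) := by
  have hl := suffix_length' C xs ys
  obtain ⟨d1, ds, hT⟩ : ∃ d1 ds, (suffixLevenshtein C xs ys).1 = d1 :: ds := by
    cases h : (suffixLevenshtein C xs ys).1 with
    | nil => simp [h] at hl
    | cons a l => exact ⟨a, l, rfl⟩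
  have key := impl_cons' C x xs y (suffixLevenshtein C (x :: xs) ys) (suffixLevenshtein C xs ys)
    (levenshtein C (x :: xs) ys) d1 ds (by rw [suffix_cons₁', hT]) hT
  have hd1 : d1 = levenshtein C xs ys := by
    rw [lev_eq_head]; exact (getElem_zero_of_eq' _ hT).symm
  refine (getElem_zero_of_eq' _ key).trans ?_
  rw [hd1]
  rfl

end Levenshtein

section Aux

variable {α : Type*} [DecidableEq α]

/-- cost of aligning `replicate k a ++ replicate m b` with `v` split at position `j`. -/
def rcost (a b : α) (k m : ℕ) (v : List α) (j : ℕ) : ℕ :=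
  (max k j - min k (List.count a (v.take j))) +
    (max m (v.length - j) - min m (List.count b (v.drop j)))

lemma lev_nil_left : ∀ v : List α, levenshtein Levenshtein.defaultCost ([] : List α) v = v.length := by
  intro v
  induction v with
  | nil => simp [levenshtein_nil_nil]
  | cons c v ih => simp [levenshtein_nil_cons, ih]; omega

lemma lev_nil_right : ∀ u : List α, levenshtein Levenshtein.defaultCost u ([] : List α) = u.length := by
  intro u
  induction u with
  | nil => simp [levenshtein_nil_nil]
  | cons c u ih => simp [levenshtein_cons_nil, ih]; omega

lemma lev_symm : ∀ u v : List α,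
    levenshtein Levenshtein.defaultCost u v = levenshtein Levenshtein.defaultCost v u := by
  intro u
  induction u with
  | nil => intro v; rw [lev_nil_left, lev_nil_right]
  | cons a u ihu =>
    intro v
    induction v with
    | nil => rw [lev_nil_left, lev_nil_right]
    | cons c v ihv =>
      rw [levenshtein_cons_cons, levenshtein_cons_cons]
      have h1 := ihu (c :: v)
      have h2 := ihv
      have h3 := ihu v
      have hs : (Levenshtein.defaultCost.substitute a c : ℕ) =
          Levenshtein.defaultCost.substitute c a := by
        simp [Levenshtein.defaultCost, eq_comm]
      simp only [Levenshtein.defaultCost] at *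
      omega

lemma ham_symm (u v : List α) : hammingDistL u v = hammingDistL v u := by
  induction u generalizing v with
  | nil => cases v <;> simp [hammingDistL]
  | cons a u ih =>
    cases v with
    | nil => simp [hammingDistL]
    | cons c v =>
      simp only [hammingDistL, List.zip_cons_cons, List.countP_cons] at *
      rw [ih v]
      simp [ne_comm]

lemma lev_le_ham : ∀ u v : List α, u.length = v.length →
    levenshtein Levenshtein.defaultCost u v ≤ hammingDistL u v := by
  intro u
  induction u with
  | nil =>
    intro v hv
    cases v with
    | nil => simp [levenshtein_nil_nil, hammingDistL]
    | cons c v => simp at hv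
  | cons a u ih =>
    intro v hv
    cases v with
    | nil => simp at hv
    | cons c v =>
      simp only [List.length_cons, Nat.succ_inj] at hv
      rw [levenshtein_cons_cons]
      have h := ih v hv
      have hham : hammingDistL (a :: u) (c :: v) =
          hammingDistL u v + if a = c then 0 else 1 := by
        simp only [hammingDistL, List.zip_cons_cons, List.countP_cons]
        by_cases hac : a = c <;> simp [hac]
      have : (Levenshtein.defaultCost.substitute a c : ℕ) = if a = c then 0 else 1 := rfl
      simp only [Levenshtein.defaultCost] at *
      omega

lemma one_run_lower (b : α) : ∀ (m : ℕ) (v : List α),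
    max m v.length - min m (List.count b v) ≤
      levenshtein Levenshtein.defaultCost (List.replicate m b) v := by
  intro m
  induction m with
  | zero =>
    intro v
    simp [lev_nil_left]
  | succ m ih =>
    intro v
    induction v with
    | nil =>
      rw [lev_nil_right]
      simp
    | cons c v ihv =>
      rw [List.replicate_succ, levenshtein_cons_cons]
      have h1 := ih (c :: v)
      have h2 := ihv
      have h3 := ih v
      rw [List.replicate_succ] at h2
      have hcl : List.count b v ≤ v.length := List.count_le_length
      have hdel : (Levenshtein.defaultCost.delete b : ℕ) = 1 := rfl
      have hins : (Levenshtein.defaultCost.insert c : ℕ) = 1 := rfl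
      rw [hdel, hins]
      by_cases hcb : c = b
      · subst hcb
        have hsub : (Levenshtein.defaultCost.substitute c c : ℕ) = 0 := by
          simp [Levenshtein.defaultCost]
        have hc : List.count c (c :: v) = List.count c v + 1 := List.count_cons_self
        simp only [List.length_cons] at h1 ⊢
        omega
      · have hsub : (Levenshtein.defaultCost.substitute b c : ℕ) = 1 := by
          simp [Levenshtein.defaultCost, Ne.symm hcb]
        have hc : List.count b (c :: v) = List.count b v := by
          rw [List.count_cons]
          simp [beq_iff_eq, hcb]
        simp only [List.length_cons] at h1 ⊢
        omega

lemma two_run_lower (a b : α) : ∀ (k m : ℕ) (v : List α),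
    ∃ j, j ≤ v.length ∧ rcost a b k m v j ≤
      levenshtein Levenshtein.defaultCost (List.replicate k a ++ List.replicate m b) v := by
  intro k
  induction k with
  | zero =>
    intro m v
    refine ⟨0, Nat.zero_le _, ?_⟩
    simpa [rcost] using one_run_lower b m v
  | succ k ih =>
    intro m v
    induction v with
    | nil =>
      refine ⟨0, le_refl _, ?_⟩
      rw [lev_nil_right]
      simp [rcost]
    | cons c v ihv =>
      obtain ⟨j1, hj1, hc1⟩ := ih m (c :: v)
      obtain ⟨j2, hj2, hc2⟩ := ihv
      obtain ⟨j3, hj3, hc3⟩ := ih m v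
      have hrep : List.replicate (k+1) a ++ List.replicate m b
          = a :: (List.replicate k a ++ List.replicate m b) := by
        rw [List.replicate_succ, List.cons_append]
      rw [hrep] at hc2 ⊢
      rw [levenshtein_cons_cons]
      have hs : (Levenshtein.defaultCost.substitute a c : ℕ) = if a = c then 0 else 1 := rfl
      have hdel : (Levenshtein.defaultCost.delete a : ℕ) = 1 := rfl
      have hins : (Levenshtein.defaultCost.insert c : ℕ) = 1 := rfl
      rw [hs, hdel, hins]
      rcases le_total
          (1 + levenshtein Levenshtein.defaultCost (List.replicate k a ++ List.replicate m b) (c :: v))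
          (min (1 + levenshtein Levenshtein.defaultCost (a :: (List.replicate k a ++ List.replicate m b)) v)
            ((if a = c then 0 else 1) + levenshtein Levenshtein.defaultCost (List.replicate k a ++ List.replicate m b) v)) with hmin | hmin
      · -- deletion branch is minimal: use j1
        refine ⟨j1, hj1, ?_⟩
        have hkey : rcost a b (k+1) m (c :: v) j1 ≤ 1 + rcost a b k m (c :: v) j1 := by
          simp only [rcost]; omega
        omega
      · rcases le_total
            (1 + levenshtein Levenshtein.defaultCost (a :: (List.replicate k a ++ List.replicate m b)) v)
            ((if a = c then 0 else 1) + levenshtein Levenshtein.defaultCost (List.replicate k a ++ List.replicate m b) v) with hmin2 | hmin2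
        · -- insertion branch: use j2 + 1
          refine ⟨j2 + 1, by simpa using Nat.succ_le_succ hj2, ?_⟩
          have hkey : rcost a b (k+1) m (c :: v) (j2+1) ≤ 1 + rcost a b (k+1) m v j2 := by
            simp only [rcost, List.take_succ_cons, List.drop_succ_cons, List.count_cons,
              List.length_cons]
            by_cases hac : c = a <;> simp [hac, beq_iff_eq] <;> omega
          omega
        · -- substitution branch: use j3 + 1
          refine ⟨j3 + 1, by simpa using Nat.succ_le_succ hj3, ?_⟩
          have hkey : rcost a b (k+1) m (c :: v) (j3+1) ≤
              (if a = c then 0 else 1) + rcost a b k m v j3 := by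
            simp only [rcost, List.take_succ_cons, List.drop_succ_cons, List.count_cons,
              List.length_cons]
            have hb : (if (c == a) = true then 1 else 0 : ℕ) = if c = a then 1 else 0 := by
              simp [beq_iff_eq]
            rw [hb]
            by_cases hac : a = c
            · rw [if_pos hac.symm, if_pos hac]
              omega
            · rw [if_neg (fun h => hac h.symm), if_neg hac]
              omega
          omega

lemma ham_append (u1 u2 v : List α) :
    hammingDistL (u1 ++ u2) v =
      hammingDistL u1 (v.take u1.length) + hammingDistL u2 (v.drop u1.length) := by
  induction u1 generalizing v with
  | nil => simp [hammingDistL]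
  | cons x u1 ih =>
    cases v with
    | nil => simp [hammingDistL]
    | cons c v =>
      simp only [List.cons_append, List.length_cons, List.take_succ_cons, List.drop_succ_cons,
        hammingDistL, List.zip_cons_cons, List.countP_cons] at *
      rw [ih v]
      omega

lemma ham_replicate (a : α) : ∀ (k : ℕ) (w : List α), w.length = k →
    hammingDistL (List.replicate k a) w = k - List.count a w := by
  intro k
  induction k with
  | zero =>
    intro w hw
    rw [List.length_eq_zero_iff] at hw
    simp [hw, hammingDistL]
  | succ k ih =>
    intro w hw
    cases w with
    | nil => simp at hw
    | cons c w =>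
      simp only [List.length_cons, Nat.succ_inj] at hw
      have h := ih w hw
      have hcl : List.count a w ≤ w.length := List.count_le_length
      rw [List.replicate_succ]
      simp only [hammingDistL] at h ⊢
      rw [List.zip_cons_cons, List.countP_cons, List.count_cons]
      have h1 : (if (c == a) = true then 1 else 0 : ℕ) = if c = a then 1 else 0 := by
        simp [beq_iff_eq]
      rw [h1]
      by_cases hca : c = a
      · rw [if_neg (by simp [hca]), if_pos hca]
        omega
      · have hac : ¬ (a = c) := fun h' => hca h'.symm
        rw [if_pos (by simp [hac]), if_neg hca]
        omega

lemma rcost_ge (a b : α) (k m : ℕ) (v : List α) (hn : v.length = k + m) :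
    ∀ j, j ≤ v.length →
      (k - List.count a (v.take k)) + (m - List.count b (v.drop k)) ≤ rcost a b k m v j := by
  intro j hj
  rcases le_total j k with hjk | hjk
  · set t := (v.drop j).take (k - j) with ht
    have h1 : v.take k = v.take j ++ t := by
      rw [ht, ← List.take_add]
      congr 1
      omega
    have h2 : v.drop j = t ++ v.drop k := by
      rw [ht]
      conv_lhs => rw [← List.take_append_drop (k - j) (v.drop j)]
      rw [List.drop_drop]
      congr 2
      omega
    have hA : List.count a (v.take k) = List.count a (v.take j) + List.count a t := by
      rw [h1, List.count_append]
    have hB : List.count b (v.drop j) = List.count b t + List.count b (v.drop k) := by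
      rw [h2, List.count_append]
    have htl : t.length ≤ k - j := by
      rw [ht]; simp
    have hca : List.count a t ≤ t.length := List.count_le_length
    have hcb : List.count b t ≤ t.length := List.count_le_length
    have hAj : List.count a (v.take j) ≤ j := by
      calc List.count a (v.take j) ≤ (v.take j).length := List.count_le_length
        _ ≤ j := by simp
    have hBk : List.count b (v.drop k) ≤ m := by
      calc List.count b (v.drop k) ≤ (v.drop k).length := List.count_le_length
        _ ≤ m := by simp; omega
    simp only [rcost]
    omega
  · set t := (v.drop k).take (j - k) with ht
    have h1 : v.take j = v.take k ++ t := by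
      rw [ht, ← List.take_add]
      congr 1
      omega
    have h2 : v.drop k = t ++ v.drop j := by
      rw [ht]
      conv_lhs => rw [← List.take_append_drop (j - k) (v.drop k)]
      rw [List.drop_drop]
      congr 2
      omega
    have hA : List.count a (v.take j) = List.count a (v.take k) + List.count a t := by
      rw [h1, List.count_append]
    have hB : List.count b (v.drop k) = List.count b t + List.count b (v.drop j) := by
      rw [h2, List.count_append]
    have htl : t.length ≤ j - k := by
      rw [ht]; simp
    have hca : List.count a t ≤ t.length := List.count_le_length
    have hcb : List.count b t ≤ t.length := List.count_le_length
    have hAk : List.count a (v.take k) ≤ k := by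
      calc List.count a (v.take k) ≤ (v.take k).length := List.count_le_length
        _ ≤ k := by simp
    have hBj : List.count b (v.drop j) ≤ v.length - j := by
      calc List.count b (v.drop j) ≤ (v.drop j).length := List.count_le_length
        _ ≤ v.length - j := by simp
    simp only [rcost]
    omega

lemma rep_of_destutter'_le_one : ∀ (u : List α) (a : α),
    (List.destutter' (· ≠ ·) a u).length ≤ 1 → u = List.replicate u.length a := by
  intro u
  induction u with
  | nil => intro a _; simp
  | cons c u ih =>
    intro a h
    rw [List.destutter'_cons] at h
    by_cases hac : a ≠ c
    · rw [if_pos hac] at h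
      have h1 : (List.destutter' (· ≠ ·) c u) ≠ [] := u.destutter'_ne_nil _
      have h2 : 0 < (List.destutter' (· ≠ ·) c u).length := List.length_pos_iff.mpr h1
      simp only [List.length_cons] at h
      omega
    · push_neg at hac
      subst hac
      rw [if_neg (by simp)] at h
      have hu := ih a h
      simp only [List.length_cons, List.replicate_succ]
      exact congrArg (a :: ·) hu

lemma two_run_structure : ∀ (u : List α) (a : α),
    (List.destutter' (· ≠ ·) a u).length ≤ 2 →
      ∃ (k m : ℕ) (b : α), a :: u = List.replicate k a ++ List.replicate m b := by
  intro u
  induction u with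
  | nil =>
    intro a _
    exact ⟨1, 0, a, by simp⟩
  | cons c u ih =>
    intro a h
    rw [List.destutter'_cons] at h
    by_cases hac : a ≠ c
    · rw [if_pos hac] at h
      simp only [List.length_cons] at h
      have hu : u = List.replicate u.length c := rep_of_destutter'_le_one u c (by omega)
      refine ⟨1, u.length + 1, c, ?_⟩
      simp only [List.replicate_succ, List.replicate_one, List.cons_append, List.nil_append]
      rw [← hu]
      simp
    · push_neg at hac
      subst hac
      rw [if_neg (by simp)] at h
      obtain ⟨k, m, b, hk⟩ := ih a h
      exact ⟨k + 1, m, b, by rw [List.replicate_succ, List.cons_append, ← hk]⟩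

lemma ham_le_lev (u v : List α) (hlen : u.length = v.length) (h2 : numRuns u ≤ 2) :
    hammingDistL u v ≤ levenshtein Levenshtein.defaultCost u v := by
  cases u with
  | nil =>
    have hv : v = [] := by
      cases v with
      | nil => rfl
      | cons _ _ => simp at hlen
    subst hv
    simp [hammingDistL, levenshtein_nil_nil]
  | cons x u' =>
    have h2' : (List.destutter' (· ≠ ·) x u').length ≤ 2 := by
      simpa [numRuns, List.destutter] using h2
    obtain ⟨k, m, b, hk⟩ := two_run_structure u' x h2'
    rw [hk] at hlen ⊢
    have hvlen : v.length = k + m := by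
      simp at hlen
      omega
    obtain ⟨j, hj, hcost⟩ := two_run_lower x b k m v
    have hge := rcost_ge x b k m v hvlen j hj
    have hham : hammingDistL (List.replicate k x ++ List.replicate m b) v =
        (k - List.count x (v.take k)) + (m - List.count b (v.drop k)) := by
      rw [ham_append]
      have hl1 : (v.take (List.replicate k x).length).length = k := by
        simp; omega
      have hl2 : (v.drop (List.replicate k x).length).length = m := by
        simp; omega
      rw [ham_replicate x k _ (by simpa using hl1), ham_replicate b m _ (by simpa using hl2)]
      simp
    omega

end Aux

/-- if `u` and `v` have the same length and one of them has at most
two runs, then the Levenshtein distance equals the Hamming distance. -/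
theorem lev_eq_hamming_of_two_runs {α : Type*} [DecidableEq α] (u v : List α)
    (hlen : u.length = v.length) (hruns : numRuns u ≤ 2 ∨ numRuns v ≤ 2) :
    levenshtein Levenshtein.defaultCost u v = hammingDistL u v := by
  have hub := lev_le_ham u v hlen
  rcases hruns with h | h
  · exact le_antisymm hub (ham_le_lev u v hlen h)
  · have := ham_le_lev v u hlen.symm h
    rw [lev_symm v u, ← ham_symm u v] at this
    exact le_antisymm hub this
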